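/- Let Z be a random vector in ℝ^d with 𝔼Z = 0 and 𝔼‖Z‖₂² < ∞, and let θ > 0. Then ‖ 𝔼[ Z · min(‖Z‖₂², 1/θ)/‖Z‖₂² ] ‖₂ ≤ √( θ·‖Σ₀‖·tr(Σ₀) ), where Σ₀ = 𝔼[Z Zᵀ] (with the convention that the integrand is 0 on the event Z = 0). -/

import Mathlib

open MeasureTheory ProbabilityTheory Matrix Real
open scoped InnerProductSpace

noncomputable section

/-- Vectors in `ℝ^d` with the Euclidean norm. -/
abbrev Vec (d : ℕ) := EuclideanSpace ℝ (Fin d)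

/-- Real `d × d` matrices. -/
abbrev Mat (d : ℕ) := Matrix (Fin d) (Fin d) ℝ

variable {d : ℕ}

/-- Operator (spectral) norm of a square matrix. -/
noncomputable def opNorm (A : Mat d) : ℝ := ‖Matrix.toEuclideanCLM (𝕜 := ℝ) A‖

/-- Frobenius (Hilbert–Schmidt) norm. -/
noncomputable def frobNorm (A : Mat d) : ℝ := Real.sqrt (∑ i, ∑ j, (A i j) ^ 2)

/-- Nuclear norm `‖A‖₁ = tr √(AᵀA)`. -/
noncomputable def nuclearNorm (A : Mat d) : ℝ :=
  (((Matrix.posSemidef_conjTranspose_mul_self A).1.eigenvectorUnitary : Mat d) *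
    Matrix.diagonal (Real.sqrt ∘ (Matrix.posSemidef_conjTranspose_mul_self A).1.eigenvalues) *
    star ((Matrix.posSemidef_conjTranspose_mul_self A).1.eigenvectorUnitary : Mat d)).trace

/-- Outer product `v vᵀ`. -/
def outer (v : Vec d) : Mat d := Matrix.of fun i j => v i * v j

/-- Entrywise expectation of a random matrix. -/
noncomputable def matExp {Ω : Type*} [MeasurableSpace Ω] (P : Measure Ω) (F : Ω → Mat d) : Mat d :=
  Matrix.of fun i j => ∫ ω, F ω i j ∂P

/-- The truncation function `ψ(x) = sign(x) · min(|x|, 1)`. -/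
noncomputable def psi (x : ℝ) : ℝ := Real.sign x * min |x| 1

/-- Mean vector `μ₀ = 𝔼 X`. -/
noncomputable def meanVec {Ω : Type*} [MeasurableSpace Ω] (P : Measure Ω) (X : Ω → Vec d) : Vec d :=
  ∫ ω, X ω ∂P

/-- Covariance matrix `Σ₀ = 𝔼[(X−μ₀)(X−μ₀)ᵀ]`. -/
noncomputable def covMat {Ω : Type*} [MeasurableSpace Ω] (P : Measure Ω) (X : Ω → Vec d) : Mat d :=
  matExp P (fun ω => outer (X ω - meanVec P X))

/-- `σ₀ = ‖𝔼[‖X−μ₀‖₂² (X−μ₀)(X−μ₀)ᵀ]‖^{1/2}`. -/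
noncomputable def sigma0 {Ω : Type*} [MeasurableSpace Ω] (P : Measure Ω) (X : Ω → Vec d) : ℝ :=
  Real.sqrt (opNorm (matExp P
    (fun ω => ‖X ω - meanVec P X‖ ^ 2 • outer (X ω - meanVec P X))))

/-- Intrinsic dimension `d̄ = σ₀²/‖Σ₀‖²`. -/
noncomputable def dbar {Ω : Type*} [MeasurableSpace Ω] (P : Measure Ω) (X : Ω → Vec d) : ℝ :=
  (sigma0 P X) ^ 2 / (opNorm (covMat P X)) ^ 2

/-- The truncated covariance estimator
`Σ̂(θ) = (mθ)⁻¹ ∑ᵢ ψ(θ‖Xᵢ−μ̂‖₂²) (Xᵢ−μ̂)(Xᵢ−μ̂)ᵀ/‖Xᵢ−μ̂‖₂²`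
(a summand being `0` when `Xᵢ = μ̂`, by the `0/0 = 0` convention). -/
noncomputable def truncCov {Ω : Type*} (m : ℕ) (X : Fin m → Ω → Vec d)
    (muhat : Ω → Vec d) (θ : ℝ) (ω : Ω) : Mat d :=
  (1 / (m * θ)) •
    ∑ i, (psi (θ * ‖X i ω - muhat ω‖ ^ 2) / ‖X i ω - muhat ω‖ ^ 2) • outer (X i ω - muhat ω)

/-- `μ̂` is a geometric median of the group means of the groups `G j` of the sample `X`:
it minimizes `z ↦ ∑ⱼ ‖z − μ̂ⱼ‖₂` where `μ̂ⱼ = |G j|⁻¹ ∑_{i ∈ G j} Xᵢ`. -/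
def IsMedianOfMeans {Ω : Type*} {m k : ℕ} (X : Fin m → Ω → Vec d)
    (G : Fin k → Finset (Fin m)) (muhat : Ω → Vec d) : Prop :=
  ∀ ω, ∀ z : Vec d,
    ∑ j, ‖muhat ω - ((G j).card : ℝ)⁻¹ • ∑ i ∈ G j, X i ω‖ ≤
      ∑ j, ‖z - ((G j).card : ℝ)⁻¹ • ∑ i ∈ G j, X i ω‖

/-- `θ_j = (1/σ_j)·√(β/m)` with `σ_j = σ_min 2^j`. -/
noncomputable def lepskiTheta (σmin β : ℝ) (m : ℕ) (j : ℤ) : ℝ :=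
  (1 / (σmin * 2 ^ j)) * Real.sqrt (β / m)

/-- The index set `𝒥 = {j ∈ ℤ : σ_min ≤ σ_min 2^j < 2 σ_max}`. -/
def lepskiJ (σmin σmax : ℝ) : Set ℤ :=
  {j : ℤ | σmin ≤ σmin * 2 ^ j ∧ σmin * 2 ^ j < 2 * σmax}

/-- `Σ̂_{m,j} = Σ̂(θ_j)`. -/
noncomputable def lepskiSig {Ω : Type*} (m : ℕ) (X : Fin m → Ω → Vec d) (muhat : Ω → Vec d)
    (σmin β : ℝ) (j : ℤ) (ω : Ω) : Mat d :=
  truncCov m X muhat (lepskiTheta σmin β m j) ω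

/-- `jstar ω` is the minimal `j ∈ 𝒥` such that for all `l ∈ 𝒥` with `l > j`,
`‖Σ̂_{m,l} − Σ̂_{m,j}‖ ≤ 6 σ_l √(β/m)`. -/
def IsLepskiIndex {Ω : Type*} {m : ℕ} (X : Fin m → Ω → Vec d) (muhat : Ω → Vec d)
    (σmin σmax β : ℝ) (jstar : Ω → ℤ) : Prop :=
  ∀ ω, jstar ω ∈ lepskiJ σmin σmax ∧
    (∀ l ∈ lepskiJ σmin σmax, jstar ω < l →
      opNorm (lepskiSig m X muhat σmin β l ω - lepskiSig m X muhat σmin β (jstar ω) ω) ≤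
        6 * (σmin * 2 ^ l) * Real.sqrt (β / m)) ∧
    (∀ j ∈ lepskiJ σmin σmax,
      (∀ l ∈ lepskiJ σmin σmax, j < l →
        opNorm (lepskiSig m X muhat σmin β l ω - lepskiSig m X muhat σmin β j ω) ≤
          6 * (σmin * 2 ^ l) * Real.sqrt (β / m)) →
      jstar ω ≤ j)

/-- Orthogonal projector onto the span of the (orthonormal eigen-)vectors `u 0, …, u (k-1)`. -/
noncomputable def projTop (k : ℕ) (u : Fin d → Fin d → ℝ) : Mat d :=
  ∑ i : Fin d, if (i : ℕ) < k then Matrix.of (fun a b => u i a * u i b) else (0 : Mat d)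

/-- Quadratic form `vᵀ M v`. -/
def quadForm (M : Mat d) (v : Vec d) : ℝ := ∑ i, ∑ j, v i * M i j * v j

/-- Matrix function `f(A) = U f(Λ) Uᵀ` defined through the spectral decomposition of a
Hermitian (real symmetric) matrix. -/
noncomputable def matApply (f : ℝ → ℝ) {A : Mat d} (hA : A.IsHermitian) : Mat d :=
  (hA.eigenvectorUnitary : Mat d) * Matrix.diagonal (f ∘ hA.eigenvalues) *
    star (hA.eigenvectorUnitary : Mat d)

end


section Aux
open MeasureTheory
variable {d : ℕ} {Ω : Type*} [MeasurableSpace Ω] {P : Measure Ω}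

private lemma integral_CS (f g : Ω → ℝ) (hf : MemLp f 2 P) (hg : MemLp g 2 P) :
    ∫ ω, f ω * g ω ∂P ≤ Real.sqrt (∫ ω, f ω ^ 2 ∂P) * Real.sqrt (∫ ω, g ω ^ 2 ∂P) := by
  set F := hf.toLp f
  set G := hg.toLp g
  have hFf := hf.coeFn_toLp
  have hGg := hg.coeFn_toLp
  have h1 : (inner ℝ F G : ℝ) = ∫ ω, f ω * g ω ∂P := by
    rw [MeasureTheory.L2.inner_def]
    refine integral_congr_ae ?_
    filter_upwards [hFf, hGg] with ω h1 h2
    simp [F, G, h1, h2, RCLike.inner_apply, mul_comm]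
  have h2 : (‖F‖ : ℝ) ^ 2 = ∫ ω, f ω ^ 2 ∂P := by
    rw [← real_inner_self_eq_norm_sq, MeasureTheory.L2.inner_def]
    refine integral_congr_ae ?_
    filter_upwards [hFf] with ω h1
    simp [F, h1, RCLike.inner_apply, sq]
  have h3 : (‖G‖ : ℝ) ^ 2 = ∫ ω, g ω ^ 2 ∂P := by
    rw [← real_inner_self_eq_norm_sq, MeasureTheory.L2.inner_def]
    refine integral_congr_ae ?_
    filter_upwards [hGg] with ω h1
    simp [G, h1, RCLike.inner_apply, sq]
  calc ∫ ω, f ω * g ω ∂P = inner ℝ F G := h1.symm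
    _ ≤ ‖F‖ * ‖G‖ := real_inner_le_norm F G
    _ = Real.sqrt (∫ ω, f ω ^ 2 ∂P) * Real.sqrt (∫ ω, g ω ^ 2 ∂P) := by
        rw [← h2, ← h3, Real.sqrt_sq (norm_nonneg _), Real.sqrt_sq (norm_nonneg _)]

private lemma vec_norm_sq (x : Vec d) : ‖x‖ ^ 2 = ∑ i, (x i) ^ 2 := by
  rw [EuclideanSpace.norm_eq, Real.sq_sqrt (by positivity)]
  simp [sq_abs]

private lemma coord_sq_le (x : Vec d) (i : Fin d) : (x i) ^ 2 ≤ ‖x‖ ^ 2 := by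
  rw [vec_norm_sq]
  exact Finset.single_le_sum (fun j _ => sq_nonneg (x j)) (Finset.mem_univ i)

private lemma integrable_mul_coord (Z : Ω → Vec d) (hmeas : Measurable Z)
    (hmom : Integrable (fun ω => ‖Z ω‖ ^ 2) P) (i j : Fin d) :
    Integrable (fun ω => Z ω i * Z ω j) P := by
  refine hmom.mono' ?_ ?_
  · exact (Measurable.mul (f := fun ω => Z ω i) (g := fun ω => Z ω j)
      ((EuclideanSpace.proj i).continuous.measurable.comp hmeas)
      ((EuclideanSpace.proj j).continuous.measurable.comp hmeas)).aestronglyMeasurable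
  · refine Filter.Eventually.of_forall fun ω => ?_
    have h1 := coord_sq_le (Z ω) i
    have h2 := coord_sq_le (Z ω) j
    have := sq_nonneg (Z ω i - Z ω j)
    have := sq_nonneg (Z ω i + Z ω j)
    simp only [Real.norm_eq_abs, abs_mul]
    nlinarith [abs_nonneg (Z ω i), abs_nonneg (Z ω j), sq_abs (Z ω i), sq_abs (Z ω j),
      sq_nonneg (|Z ω i| - |Z ω j|), sq_nonneg (‖Z ω‖)]

private lemma matExp_outer_entry (Z : Ω → Vec d) (i j : Fin d) :
    matExp P (fun ω => outer (Z ω)) i j = ∫ ω, Z ω i * Z ω j ∂P := rfl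

private lemma trace_matExp (Z : Ω → Vec d) (hmeas : Measurable Z)
    (hmom : Integrable (fun ω => ‖Z ω‖ ^ 2) P) :
    (matExp P (fun ω => outer (Z ω))).trace = ∫ ω, ‖Z ω‖ ^ 2 ∂P := by
  have : ∀ i : Fin d, Integrable (fun ω => (Z ω i) ^ 2) P := by
    intro i
    simpa [sq] using integrable_mul_coord Z hmeas hmom i i
  rw [Matrix.trace]
  calc ∑ i, (matExp P (fun ω => outer (Z ω))).diag i
      = ∑ i, ∫ ω, (Z ω i) ^ 2 ∂P := by
        refine Finset.sum_congr rfl fun i _ => ?_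
        rw [Matrix.diag_apply, matExp_outer_entry]
        congr 1; ext ω; ring
    _ = ∫ ω, ∑ i, (Z ω i) ^ 2 ∂P := (integral_finset_sum _ (fun i _ => this i)).symm
    _ = ∫ ω, ‖Z ω‖ ^ 2 ∂P := by
        refine integral_congr_ae (Filter.Eventually.of_forall fun ω => ?_)
        exact (vec_norm_sq (Z ω)).symm

private lemma quad_le (Z : Ω → Vec d) (hmeas : Measurable Z)
    (hmom : Integrable (fun ω => ‖Z ω‖ ^ 2) P)
    (v : Vec d) (hv : ‖v‖ = 1) :
    ∫ ω, (inner ℝ v (Z ω) : ℝ) ^ 2 ∂P ≤ opNorm (matExp P (fun ω => outer (Z ω))) := by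
  set M := matExp P (fun ω => outer (Z ω)) with hM
  have hij := integrable_mul_coord Z hmeas hmom
  have key : ∫ ω, (inner ℝ v (Z ω) : ℝ) ^ 2 ∂P
      = ∑ i, ∑ j, (v i * v j) * M i j := by
    have hpt : ∀ ω, (inner ℝ v (Z ω) : ℝ) ^ 2 = ∑ i, ∑ j, (v i * v j) * (Z ω i * Z ω j) := by
      intro ω
      have : (inner ℝ v (Z ω) : ℝ) = ∑ i, v i * Z ω i := by
        simp [PiLp.inner_apply, RCLike.inner_apply, mul_comm]
      rw [this, sq, Finset.sum_mul_sum]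
      exact Finset.sum_congr rfl fun i _ => Finset.sum_congr rfl fun j _ => by ring
    calc ∫ ω, (inner ℝ v (Z ω) : ℝ) ^ 2 ∂P
        = ∫ ω, ∑ i, ∑ j, (v i * v j) * (Z ω i * Z ω j) ∂P := by
          exact integral_congr_ae (Filter.Eventually.of_forall hpt)
      _ = ∑ i, ∫ ω, ∑ j, (v i * v j) * (Z ω i * Z ω j) ∂P := by
          refine integral_finset_sum _ fun i _ => ?_
          exact integrable_finset_sum _ fun j _ => ((hij i j).const_mul _)
      _ = ∑ i, ∑ j, ∫ ω, (v i * v j) * (Z ω i * Z ω j) ∂P := by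
          refine Finset.sum_congr rfl fun i _ => ?_
          exact integral_finset_sum _ fun j _ => ((hij i j).const_mul _)
      _ = ∑ i, ∑ j, (v i * v j) * M i j := by
          refine Finset.sum_congr rfl fun i _ => Finset.sum_congr rfl fun j _ => ?_
          rw [integral_const_mul]; rfl
  have hTv : (inner ℝ v ((Matrix.toEuclideanCLM (𝕜 := ℝ) M) v) : ℝ)
      = ∑ i, ∑ j, (v i * v j) * M i j := by
    have happ : ∀ i, ((Matrix.toEuclideanCLM (𝕜 := ℝ) M) v) i = ∑ j, M i j * v j := fun i => rfl
    simp only [PiLp.inner_apply, RCLike.inner_apply, conj_trivial, happ, Finset.mul_sum, Finset.sum_mul]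
    exact Finset.sum_congr rfl fun i _ => Finset.sum_congr rfl fun j _ => by ring
  rw [key, ← hTv]
  calc (inner ℝ v ((Matrix.toEuclideanCLM (𝕜 := ℝ) M) v) : ℝ)
      ≤ ‖v‖ * ‖(Matrix.toEuclideanCLM (𝕜 := ℝ) M) v‖ := real_inner_le_norm _ _
    _ ≤ ‖v‖ * (‖Matrix.toEuclideanCLM (𝕜 := ℝ) M‖ * ‖v‖) := by
        exact mul_le_mul_of_nonneg_left (ContinuousLinearMap.le_opNorm _ _) (norm_nonneg _)
    _ = opNorm M := by rw [hv, opNorm]; ring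

end Aux

/-- bias bound for the truncated identity,
`‖𝔼[Z·min(‖Z‖₂²,1/θ)/‖Z‖₂²]‖₂ ≤ √(θ‖Σ₀‖tr(Σ₀))`. -/
theorem stmt19 {d : ℕ} {Ω : Type*} [MeasurableSpace Ω] (P : Measure Ω) [IsProbabilityMeasure P]
    (Z : Ω → Vec d) (θ : ℝ)
    (hmeas : Measurable Z)
    (hmom : Integrable (fun ω => ‖Z ω‖ ^ 2) P)
    (hmean : (∫ ω, Z ω ∂P) = 0)
    (hθ : 0 < θ) :
    ‖∫ ω, (min (‖Z ω‖ ^ 2) (1 / θ) / ‖Z ω‖ ^ 2) • Z ω ∂P‖ ≤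
      Real.sqrt (θ * opNorm (matExp P (fun ω => outer (Z ω))) *
        (matExp P (fun ω => outer (Z ω))).trace) := by
  set M := matExp P (fun ω => outer (Z ω)) with hM
  have htr : M.trace = ∫ ω, ‖Z ω‖ ^ 2 ∂P := trace_matExp Z hmeas hmom
  have htrnn : 0 ≤ M.trace := htr ▸ integral_nonneg (fun ω => sq_nonneg _)
  have hop : 0 ≤ opNorm M := norm_nonneg _
  set a : Ω → ℝ := fun ω => (‖Z ω‖ ^ 2 - min (‖Z ω‖ ^ 2) (1 / θ)) / ‖Z ω‖ ^ 2 with ha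
  have ha_meas : Measurable a := by
    apply Measurable.div
    · exact ((hmeas.norm.pow measurable_const).sub
        ((hmeas.norm.pow measurable_const).min measurable_const))
    · exact hmeas.norm.pow measurable_const
  have hmin_nn : ∀ ω, 0 ≤ min (‖Z ω‖ ^ 2) (1 / θ) :=
    fun ω => le_min (sq_nonneg _) (by positivity)
  have ha0 : ∀ ω, 0 ≤ a ω :=
    fun ω => div_nonneg (by linarith [min_le_left (‖Z ω‖ ^ 2) (1 / θ)]) (sq_nonneg _)
  have ha1 : ∀ ω, a ω ≤ 1 :=
    fun ω => div_le_one_of_le₀ (by linarith [hmin_nn ω]) (sq_nonneg _)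
  have ha_le : ∀ ω, a ω ≤ θ * ‖Z ω‖ ^ 2 := by
    intro ω
    by_cases h : ‖Z ω‖ ^ 2 ≤ 1 / θ
    · have : a ω = 0 := by
        show (‖Z ω‖ ^ 2 - min (‖Z ω‖ ^ 2) (1 / θ)) / ‖Z ω‖ ^ 2 = 0
        rw [min_eq_left h, sub_self, zero_div]
      rw [this]; positivity
    · push_neg at h
      have h1 : (1 : ℝ) ≤ θ * ‖Z ω‖ ^ 2 := by
        rw [div_lt_iff₀ hθ] at h; linarith
      linarith [ha1 ω]
  have hpt : ∀ ω, (min (‖Z ω‖ ^ 2) (1 / θ) / ‖Z ω‖ ^ 2) • Z ω = Z ω - a ω • Z ω := by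
    intro ω
    by_cases hz : Z ω = 0
    · simp [hz, ha]
    · have hn : ‖Z ω‖ ^ 2 ≠ 0 := by
        have := norm_ne_zero_iff.2 hz; positivity
      rw [eq_sub_iff_add_eq, ha, ← add_smul, ← add_div]
      have : min (‖Z ω‖ ^ 2) (1 / θ) + (‖Z ω‖ ^ 2 - min (‖Z ω‖ ^ 2) (1 / θ)) = ‖Z ω‖ ^ 2 := by
        ring
      rw [this, div_self hn, one_smul]
  have hZint : Integrable Z P := by
    refine Integrable.mono' ((integrable_const (1 : ℝ)).add hmom) hmeas.aestronglyMeasurable ?_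
    refine Filter.Eventually.of_forall fun ω => ?_
    show ‖Z ω‖ ≤ 1 + ‖Z ω‖ ^ 2
    nlinarith [norm_nonneg (Z ω), sq_nonneg (‖Z ω‖ - 1)]
  have haZ : Integrable (fun ω => a ω • Z ω) P := by
    refine Integrable.mono' hZint.norm (ha_meas.smul hmeas).aestronglyMeasurable ?_
    refine Filter.Eventually.of_forall fun ω => ?_
    rw [norm_smul, Real.norm_eq_abs, abs_of_nonneg (ha0 ω)]
    nlinarith [norm_nonneg (Z ω), ha0 ω, ha1 ω]
  have hI : (∫ ω, (min (‖Z ω‖ ^ 2) (1 / θ) / ‖Z ω‖ ^ 2) • Z ω ∂P)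
      = - ∫ ω, a ω • Z ω ∂P := by
    rw [integral_congr_ae (Filter.Eventually.of_forall hpt), integral_sub hZint haZ, hmean,
      zero_sub]
  rw [hI, norm_neg]
  set I := ∫ ω, a ω • Z ω ∂P with hIdef
  rcases eq_or_ne I 0 with h0 | h0
  · rw [h0, norm_zero]; exact Real.sqrt_nonneg _
  · set v : Vec d := ‖I‖⁻¹ • I with hvdef
    have hv : ‖v‖ = 1 := norm_smul_inv_norm h0
    have hnI : ‖I‖ ≠ 0 := norm_ne_zero_iff.2 h0
    have hvI : (inner ℝ v I : ℝ) = ‖I‖ := by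
      rw [hvdef, real_inner_smul_left, real_inner_self_eq_norm_sq, sq]
      field_simp
    have hg_meas : Measurable fun ω => (inner ℝ v (Z ω) : ℝ) :=
      measurable_const.inner hmeas
    have hg2int : Integrable (fun ω => (inner ℝ v (Z ω) : ℝ) ^ 2) P := by
      refine Integrable.mono' hmom (hg_meas.pow measurable_const).aestronglyMeasurable ?_
      refine Filter.Eventually.of_forall fun ω => ?_
      rw [Real.norm_eq_abs, abs_of_nonneg (sq_nonneg _)]
      have h := abs_real_inner_le_norm v (Z ω)
      calc (inner ℝ v (Z ω) : ℝ) ^ 2 = |(inner ℝ v (Z ω) : ℝ)| ^ 2 := (sq_abs _).symm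
        _ ≤ (‖v‖ * ‖Z ω‖) ^ 2 := by
            exact pow_le_pow_left₀ (abs_nonneg _) h 2
        _ = ‖Z ω‖ ^ 2 := by rw [hv]; ring
    have hfa : MemLp a 2 P := by
      refine MemLp.of_bound ha_meas.aestronglyMeasurable 1 ?_
      refine Filter.Eventually.of_forall fun ω => ?_
      rw [Real.norm_eq_abs, abs_of_nonneg (ha0 ω)]
      exact ha1 ω
    have hfg : MemLp (fun ω => (inner ℝ v (Z ω) : ℝ)) 2 P :=
      (memLp_two_iff_integrable_sq hg_meas.aestronglyMeasurable).2 hg2int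
    have hCS := integral_CS a (fun ω => (inner ℝ v (Z ω) : ℝ)) hfa hfg
    have hinner : ‖I‖ = ∫ ω, a ω * (inner ℝ v (Z ω) : ℝ) ∂P := by
      rw [← hvI, hIdef, ← integral_inner haZ v]
      refine integral_congr_ae (Filter.Eventually.of_forall fun ω => ?_)
      exact real_inner_smul_right v (Z ω) (a ω)
    have h1 : ∫ ω, a ω ^ 2 ∂P ≤ θ * M.trace := by
      rw [htr, ← integral_const_mul]
      refine integral_mono ?_ (hmom.const_mul θ) ?_
      · exact (memLp_two_iff_integrable_sq ha_meas.aestronglyMeasurable).1 hfa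
      · intro ω
        show a ω ^ 2 ≤ θ * ‖Z ω‖ ^ 2
        nlinarith [ha0 ω, ha1 ω, ha_le ω]
    have h2 : ∫ ω, (inner ℝ v (Z ω) : ℝ) ^ 2 ∂P ≤ opNorm M := quad_le Z hmeas hmom v hv
    calc ‖I‖ = ∫ ω, a ω * (inner ℝ v (Z ω) : ℝ) ∂P := hinner
      _ ≤ Real.sqrt (∫ ω, a ω ^ 2 ∂P) * Real.sqrt (∫ ω, (inner ℝ v (Z ω) : ℝ) ^ 2 ∂P) := hCS
      _ ≤ Real.sqrt (θ * M.trace) * Real.sqrt (opNorm M) := by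
          exact mul_le_mul (Real.sqrt_le_sqrt h1) (Real.sqrt_le_sqrt h2)
            (Real.sqrt_nonneg _) (Real.sqrt_nonneg _)
      _ = Real.sqrt (θ * opNorm M * M.trace) := by
          rw [← Real.sqrt_mul (by positivity)]
          congr 1; ring
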